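/- For integers $n > 5$, $\sum_{k=2}^{n-1} \binom{n}{k}\left(1-\frac{k}{n}\right)^{2n-2k}\left(\frac{k}{n}\right)^{2k} \le \frac{2}{n}$. -/

import Mathlib

/-- A single binomial term `C(n,k) x^k y^(n-k)` with `x = k/n`, `y = 1-k/n` is at most 1. -/
lemma binom_term_le_one (n k : ℕ) (hn : 0 < n) (hk : k ≤ n) :
    (n.choose k : ℝ) * (((k : ℝ) / n) ^ k * (1 - (k : ℝ) / n) ^ (n - k)) ≤ 1 := by
  set x : ℝ := (k : ℝ) / n with hxdef
  set y : ℝ := 1 - (k : ℝ) / n with hydef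
  have hx : (0 : ℝ) ≤ x := by positivity
  have hy : (0 : ℝ) ≤ y := by
    have : (k : ℝ) / n ≤ 1 := by
      rw [div_le_one (by exact_mod_cast hn)]
      exact_mod_cast hk
    simp [hydef]; linarith
  have hsum : x + y = 1 := by simp [hxdef, hydef]
  have hbin := add_pow x y n
  rw [hsum, one_pow] at hbin
  have hmem : k ∈ Finset.range (n + 1) := Finset.mem_range.mpr (Nat.lt_succ_of_le hk)
  have hsingle : x ^ k * y ^ (n - k) * (n.choose k : ℝ)
      ≤ ∑ i ∈ Finset.range (n + 1), x ^ i * y ^ (n - i) * (n.choose i : ℝ) := by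
    apply Finset.single_le_sum (fun i _ => by positivity) hmem
  rw [← hbin] at hsingle
  linarith [hsingle, mul_comm ((n.choose k : ℝ)) (x ^ k * y ^ (n - k))]

/-- Each summand is at most `1 / C(n,k)`. -/
lemma term_le_inv_choose (n k : ℕ) (hn : 0 < n) (hk : k ≤ n) :
    (n.choose k : ℝ) * (1 - (k : ℝ) / n) ^ (2 * n - 2 * k) * ((k : ℝ) / n) ^ (2 * k)
      ≤ 1 / (n.choose k : ℝ) := by
  have hC : (1 : ℝ) ≤ (n.choose k : ℝ) := by exact_mod_cast (Nat.choose_pos hk)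
  have hCpos : (0 : ℝ) < (n.choose k : ℝ) := by linarith
  set x : ℝ := (k : ℝ) / n
  set y : ℝ := 1 - (k : ℝ) / n
  have hexp : 2 * n - 2 * k = 2 * (n - k) := by omega
  have hA := binom_term_le_one n k hn hk
  set A : ℝ := x ^ k * y ^ (n - k) with hAdef
  have hAnn : 0 ≤ A := by
    have hx : (0 : ℝ) ≤ x := by positivity
    have hy : (0 : ℝ) ≤ y := by
      have : (k : ℝ) / n ≤ 1 := by
        rw [div_le_one (by exact_mod_cast hn)]
        exact_mod_cast hk
      simp only [y]; linarith
    positivity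
  have hrw : (n.choose k : ℝ) * y ^ (2 * n - 2 * k) * x ^ (2 * k)
      = (n.choose k : ℝ) * A ^ 2 := by
    rw [hexp, mul_comm 2 (n - k), mul_comm 2 k, pow_mul, pow_mul, hAdef]
    ring
  rw [hrw, le_div_iff₀ hCpos]
  have h2 : ((n.choose k : ℝ) * A) * ((n.choose k : ℝ) * A) ≤ 1 :=
    mul_le_one₀ hA (mul_nonneg hCpos.le hAnn) hA
  calc (n.choose k : ℝ) * A ^ 2 * (n.choose k : ℝ)
      = ((n.choose k : ℝ) * A) * ((n.choose k : ℝ) * A) := by ring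
    _ ≤ 1 := h2

theorem choose_three_mono (n m : ℕ) (h3 : 3 ≤ m) : m ≤ n / 2 → n.choose 3 ≤ n.choose m := by
  induction m, h3 using Nat.le_induction with
  | base => intro _; exact le_rfl
  | succ m hm3 ih =>
    intro h
    exact (ih (by omega)).trans (Nat.choose_le_succ_of_lt_half_left (by omega))

/-- `C(n,3) ≤ C(n,k)` for `3 ≤ k ≤ n - 3`. -/
lemma choose_three_le (n k : ℕ) (hn : 6 ≤ n) (h3 : 3 ≤ k) (hk : k ≤ n - 3) :
    n.choose 3 ≤ n.choose k := by
  rcases le_or_gt k (n / 2) with h | h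
  · exact choose_three_mono n k h3 h
  · have hkn : k ≤ n := by omega
    rw [← Nat.choose_symm hkn]
    exact choose_three_mono n (n - k) (by omega) (by omega)

/-- For `n > 5`, `∑_{k=2}^{n-1} C(n,k)(1-k/n)^(2n-2k)(k/n)^(2k) ≤ 2/n`. -/
theorem stmt_6 (n : ℕ) (hn : 5 < n) :
    ∑ k ∈ Finset.Icc 2 (n - 1),
        (n.choose k : ℝ) * (1 - (k : ℝ) / n) ^ (2 * n - 2 * k) * ((k : ℝ) / n) ^ (2 * k)
      ≤ 2 / (n : ℝ) := by
  have hn6 : 6 ≤ n := hn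
  have hn0 : 0 < n := by omega
  have hN : (6 : ℝ) ≤ (n : ℝ) := by exact_mod_cast hn6
  set f : ℕ → ℝ := fun k =>
    (n.choose k : ℝ) * (1 - (k : ℝ) / n) ^ (2 * n - 2 * k) * ((k : ℝ) / n) ^ (2 * k) with hf
  -- split off k = n-1, k = 2, k = n-2
  have hsplit : Finset.Icc 2 (n - 1)
      = insert (n - 1) (insert 2 (insert (n - 2) (Finset.Icc 3 (n - 3)))) := by
    ext x
    simp only [Finset.mem_Icc, Finset.mem_insert]
    omega
  have hsum : ∑ k ∈ Finset.Icc 2 (n - 1), f k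
      = f (n - 1) + (f 2 + (f (n - 2) + ∑ k ∈ Finset.Icc 3 (n - 3), f k)) := by
    rw [hsplit, Finset.sum_insert, Finset.sum_insert, Finset.sum_insert]
    · simp only [Finset.mem_Icc]; omega
    · simp only [Finset.mem_insert, Finset.mem_Icc]; omega
    · simp only [Finset.mem_insert, Finset.mem_Icc]; omega
  -- bound on f (n-1)
  have hfn1 : f (n - 1) ≤ 1 / (3 * (n : ℝ)) := by
    have hc : (n.choose (n - 1) : ℝ) = (n : ℝ) := by
      rw [Nat.choose_symm (show 1 ≤ n by omega), Nat.choose_one_right]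
    have hcast : ((n - 1 : ℕ) : ℝ) = (n : ℝ) - 1 := by
      push_cast [Nat.cast_sub (by omega : 1 ≤ n)]; ring
    have he1 : 2 * n - 2 * (n - 1) = 2 := by omega
    have hy : 1 - ((n - 1 : ℕ) : ℝ) / n = 1 / n := by
      rw [hcast]; field_simp; ring
    -- Bernoulli
    have hn1pos : (0 : ℝ) < (n : ℝ) - 1 := by linarith
    have hbern : (3 : ℝ) ≤ (1 + 1 / ((n : ℝ) - 1)) ^ (2 * (n - 1)) := by
      have hx0 : (0 : ℝ) ≤ 1 / ((n : ℝ) - 1) := by positivity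
      have h := one_add_mul_le_pow (a := 1 / ((n : ℝ) - 1)) (by linarith) (2 * (n - 1))
      have hcast2 : ((2 * (n - 1) : ℕ) : ℝ) = 2 * ((n : ℝ) - 1) := by
        push_cast [Nat.cast_sub (by omega : 1 ≤ n)]; ring
      calc (3 : ℝ) = 1 + (2 * ((n:ℝ) - 1)) * (1 / ((n : ℝ) - 1)) := by
            rw [mul_one_div, mul_div_assoc, div_self hn1pos.ne']; norm_num
        _ = 1 + ((2 * (n - 1) : ℕ) : ℝ) * (1 / ((n : ℝ) - 1)) := by rw [hcast2]
        _ ≤ _ := h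
    have hpow : (((n : ℝ) - 1) / n) ^ (2 * (n - 1)) ≤ 1 / 3 := by
      have heq : (1 + 1 / ((n : ℝ) - 1)) = (n : ℝ) / ((n : ℝ) - 1) := by field_simp; ring
      rw [heq] at hbern
      have hpos : (0 : ℝ) < (((n : ℝ)) / ((n : ℝ) - 1)) ^ (2 * (n - 1)) := by positivity
      have hinv : (((n : ℝ) - 1) / n) ^ (2 * (n - 1))
          = ((((n : ℝ)) / ((n : ℝ) - 1)) ^ (2 * (n - 1)))⁻¹ := by
        rw [← inv_pow]
        congr 1
        rw [inv_div]
      rw [hinv]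
      rw [inv_le_comm₀ (by positivity) (by norm_num)]
      calc (1/3 : ℝ)⁻¹ = 3 := by norm_num
        _ ≤ _ := hbern
    have : f (n - 1) = (n : ℝ) * (1 / n) ^ 2 * (((n : ℝ) - 1) / n) ^ (2 * (n - 1)) := by
      rw [hf]
      simp only
      rw [hc, he1, hy, hcast]
    rw [this]
    have h1 : (n : ℝ) * (1 / n) ^ 2 = 1 / n := by field_simp
    rw [h1]
    calc 1 / (n : ℝ) * (((n : ℝ) - 1) / n) ^ (2 * (n - 1))
        ≤ 1 / (n : ℝ) * (1 / 3) := by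
          apply mul_le_mul_of_nonneg_left hpow (by positivity)
      _ = 1 / (3 * (n : ℝ)) := by ring
  -- bound on f 2 and f (n-2)
  have hchoose2 : (n.choose 2 : ℝ) = (n : ℝ) * ((n : ℝ) - 1) / 2 :=
    Nat.cast_choose_two (K := ℝ) n
  have hf2 : f 2 ≤ 2 / ((n : ℝ) * ((n : ℝ) - 1)) := by
    calc f 2 ≤ 1 / (n.choose 2 : ℝ) := term_le_inv_choose n 2 hn0 (by omega)
      _ = 2 / ((n : ℝ) * ((n : ℝ) - 1)) := by rw [hchoose2]; field_simp
  have hfn2 : f (n - 2) ≤ 2 / ((n : ℝ) * ((n : ℝ) - 1)) := by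
    have hsymm : n.choose (n - 2) = n.choose 2 :=
      Nat.choose_symm (show 2 ≤ n by omega)
    calc f (n - 2) ≤ 1 / (n.choose (n - 2) : ℝ) :=
        term_le_inv_choose n (n - 2) hn0 (by omega)
      _ = 1 / (n.choose 2 : ℝ) := by rw [hsymm]
      _ = 2 / ((n : ℝ) * ((n : ℝ) - 1)) := by rw [hchoose2]; field_simp
  -- bound on the middle sum
  have hchoose3 : ((n : ℝ) - 2) ^ 3 / 6 ≤ (n.choose 3 : ℝ) := by
    have h := Nat.pow_le_choose (α := ℝ) 3 n
    have hc3 : ((n + 1 - 3 : ℕ) : ℝ) = (n : ℝ) - 2 := by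
      rw [show n + 1 - 3 = n - 2 by omega, Nat.cast_sub (by omega : 2 ≤ n)]
      norm_num
    calc ((n : ℝ) - 2) ^ 3 / 6 = ((n + 1 - 3 : ℕ) : ℝ) ^ 3 / (Nat.factorial 3 : ℝ) := by
          rw [hc3]; norm_num [Nat.factorial]
      _ ≤ (n.choose 3 : ℝ) := by exact_mod_cast h
  have hmid : ∑ k ∈ Finset.Icc 3 (n - 3), f k
      ≤ ((n : ℝ) - 5) * (6 / ((n : ℝ) - 2) ^ 3) := by
    have hbound : ∀ k ∈ Finset.Icc 3 (n - 3), f k ≤ 6 / ((n : ℝ) - 2) ^ 3 := by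
      intro k hk
      simp only [Finset.mem_Icc] at hk
      have hkn : k ≤ n := by omega
      have h1 := term_le_inv_choose n k hn0 hkn
      have h2 : n.choose 3 ≤ n.choose k := choose_three_le n k hn6 hk.1 hk.2
      have hc3pos : (0 : ℝ) < (n.choose 3 : ℝ) := by
        exact_mod_cast Nat.choose_pos (show 3 ≤ n by omega)
      have hckpos : (0 : ℝ) < (n.choose k : ℝ) := by
        exact_mod_cast Nat.choose_pos hkn
      have hn2 : (0 : ℝ) < (n : ℝ) - 2 := by linarith
      have hd : (0 : ℝ) < ((n : ℝ) - 2) ^ 3 := pow_pos hn2 3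
      calc f k ≤ 1 / (n.choose k : ℝ) := h1
        _ ≤ 1 / (n.choose 3 : ℝ) := by
            apply one_div_le_one_div_of_le hc3pos
            exact_mod_cast h2
        _ ≤ 1 / (((n : ℝ) - 2) ^ 3 / 6) := by
            apply one_div_le_one_div_of_le (by linarith) hchoose3
        _ = 6 / ((n : ℝ) - 2) ^ 3 := by field_simp
    calc ∑ k ∈ Finset.Icc 3 (n - 3), f k
        ≤ ∑ _k ∈ Finset.Icc 3 (n - 3), 6 / ((n : ℝ) - 2) ^ 3 :=
          Finset.sum_le_sum hbound
      _ = ((n - 5 : ℕ) : ℝ) * (6 / ((n : ℝ) - 2) ^ 3) := by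
          rw [Finset.sum_const, Nat.card_Icc, show n - 3 + 1 - 3 = n - 5 from by omega,
            nsmul_eq_mul]
      _ = ((n : ℝ) - 5) * (6 / ((n : ℝ) - 2) ^ 3) := by
          congr 1
          push_cast [Nat.cast_sub (show 5 ≤ n by omega)]
          ring
  -- final arithmetic
  rw [hsum]
  have harith : 1 / (3 * (n : ℝ)) + (2 / ((n : ℝ) * ((n : ℝ) - 1))
      + (2 / ((n : ℝ) * ((n : ℝ) - 1)) + ((n : ℝ) - 5) * (6 / ((n : ℝ) - 2) ^ 3)))
      ≤ 2 / (n : ℝ) := by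
    have h1 : (0 : ℝ) < (n : ℝ) := by linarith
    have h2 : (0 : ℝ) < (n : ℝ) - 1 := by linarith
    have h3 : (0 : ℝ) < (n : ℝ) - 2 := by linarith
    set N : ℝ := (n : ℝ)
    have key : 1 / (3 * N) + (2 / (N * (N - 1)) + (2 / (N * (N - 1)) + (N - 5) * (6 / (N - 2) ^ 3)))
        = ((N - 1) * (N - 2) ^ 3 + 12 * (N - 2) ^ 3 + 18 * N * (N - 1) * (N - 5))
          / (3 * N * (N - 1) * (N - 2) ^ 3) := by
      field_simp
      ring
    rw [key, div_le_div_iff₀ (by positivity) h1]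
    have h6 : (0 : ℝ) ≤ N - 6 := by linarith
    have hp : (0 : ℝ) ≤ 5 * N ^ 4 - 65 * N ^ 3 + 270 * N ^ 2 - 334 * N + 136 := by
      nlinarith [h6, sq_nonneg (N - 6), mul_nonneg (mul_nonneg h6 h6) h6,
        mul_nonneg (mul_nonneg (mul_nonneg h6 h6) h6) h6]
    nlinarith [mul_nonneg h1.le hp]
  calc f (n - 1) + (f 2 + (f (n - 2) + ∑ k ∈ Finset.Icc 3 (n - 3), f k))
      ≤ 1 / (3 * (n : ℝ)) + (2 / ((n : ℝ) * ((n : ℝ) - 1))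
        + (2 / ((n : ℝ) * ((n : ℝ) - 1)) + ((n : ℝ) - 5) * (6 / ((n : ℝ) - 2) ^ 3))) := by
        gcongr
    _ ≤ 2 / (n : ℝ) := harith
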